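/- Fix μ ∈ [0,1), W > 0, ν ≥ 0 and λ ∈ (0,1), and set λ̄ = 1 − λ. Then as t → ∞, the ratio min{ log₂(1 + t/2) + log₂(1 + λ̄·t) , log₂( 1 + (t + λ̄·t^μ − 1)/2 ) + log₂(1 + t/t^μ) + W·log₂(1 + λ·t^ν/W) } / log₂(1 + t) converges to min{2, 2 + W·ν − μ}. -/

import Mathlib

open Filter

private lemma div_div_cancel'' {x y c : ℝ} (hc : c ≠ 0) : (x / c) / (y / c) = x / y := by
  rcases eq_or_ne y 0 with rfl | hy
  · simp
  · field_simp

private lemma log_asymp {f : ℝ → ℝ} {a L : ℝ} (hL : 0 < L)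
    (h : Tendsto (fun t => f t / t ^ a) atTop (nhds L)) :
    Tendsto (fun t => Real.log (f t) / Real.log t) atTop (nhds a) := by
  have hlog : Tendsto (fun t => Real.log (f t / t ^ a)) atTop (nhds (Real.log L)) :=
    (Real.continuousAt_log hL.ne').tendsto.comp h
  have h0 : Tendsto (fun t => Real.log (f t / t ^ a) / Real.log t) atTop (nhds 0) :=
    hlog.div_atTop Real.tendsto_log_atTop
  have h1 := h0.add (tendsto_const_nhds (x := a))
  rw [zero_add] at h1
  have hfpos : ∀ᶠ t in atTop, 0 < f t / t ^ a := h.eventually (eventually_gt_nhds hL)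
  refine h1.congr' ?_
  filter_upwards [hfpos, eventually_gt_atTop 1] with t hq ht
  have ht0 : 0 < t := lt_trans one_pos ht
  have hta : 0 < t ^ a := Real.rpow_pos_of_pos ht0 a
  have hf : 0 < f t := by
    have := mul_pos hq hta
    rwa [div_mul_cancel₀ _ hta.ne'] at this
  have hlt : Real.log t ≠ 0 := (Real.log_pos ht).ne'
  rw [Real.log_div hf.ne' hta.ne', Real.log_rpow ht0]
  field_simp
  ring

/-- Asymptotic multiplexing gain of bin-and-cancel in the weak interference
regime: with `SNR = t`, `INR = t^μ`, `SNR_side = t^ν`, `0 ≤ μ < 1`, the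
normalized sum-rate converges to `min{2, 2 + Wν − μ}`. -/
theorem bc_mux_gain_weak (μ ν W lam : ℝ)
    (hμ0 : 0 ≤ μ) (hμ1 : μ < 1) (hW : 0 < W) (hν : 0 ≤ ν)
    (hlam0 : 0 < lam) (hlam1 : lam < 1) :
    Tendsto
      (fun t : ℝ =>
        min (Real.logb 2 (1 + t / 2) + Real.logb 2 (1 + (1 - lam) * t))
            (Real.logb 2 (1 + (t + (1 - lam) * t ^ μ - 1) / 2) +
              Real.logb 2 (1 + t / t ^ μ) +
              W * Real.logb 2 (1 + lam * t ^ ν / W)) /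
          Real.logb 2 (1 + t))
      atTop (nhds (min 2 (2 + W * ν - μ))) := by
  set c := 1 - lam with hc_def
  have hc : 0 < c := by simp [hc_def]; linarith
  have h1μ : 0 < 1 - μ := by linarith
  -- component limits
  have h1 : Tendsto (fun t => Real.log (1 + t / 2) / Real.log t) atTop (nhds 1) := by
    refine log_asymp (L := 1 / 2) (by norm_num) ?_
    have base : Tendsto (fun t : ℝ => t⁻¹ + 1 / 2) atTop (nhds (1 / 2)) := by
      simpa using tendsto_inv_atTop_zero.add (tendsto_const_nhds (x := (1:ℝ)/2))
    refine base.congr' ?_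
    filter_upwards [eventually_gt_atTop 0] with t ht
    rw [Real.rpow_one]
    field_simp
  have h2 : Tendsto (fun t => Real.log (1 + c * t) / Real.log t) atTop (nhds 1) := by
    refine log_asymp (L := c) hc ?_
    have base : Tendsto (fun t : ℝ => t⁻¹ + c) atTop (nhds c) := by
      simpa using tendsto_inv_atTop_zero.add (tendsto_const_nhds (x := c))
    refine base.congr' ?_
    filter_upwards [eventually_gt_atTop 0] with t ht
    rw [Real.rpow_one]
    field_simp
  have h3 : Tendsto (fun t => Real.log (1 + (t + c * t ^ μ - 1) / 2) / Real.log t)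
      atTop (nhds 1) := by
    refine log_asymp (L := 1 / 2) (by norm_num) ?_
    have hr : Tendsto (fun t : ℝ => t ^ (μ - 1)) atTop (nhds 0) := by
      have := tendsto_rpow_neg_atTop h1μ
      rwa [neg_sub] at this
    have base : Tendsto (fun t : ℝ => 1 / 2 + (1 / 2) * t⁻¹ + (c / 2) * t ^ (μ - 1))
        atTop (nhds (1 / 2)) := by
      have := ((tendsto_const_nhds (x := (1:ℝ)/2)).add
        (tendsto_inv_atTop_zero.const_mul ((1:ℝ)/2))).add (hr.const_mul (c / 2))
      simpa using this
    refine base.congr' ?_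
    filter_upwards [eventually_gt_atTop 0] with t ht
    rw [Real.rpow_one, Real.rpow_sub ht, Real.rpow_one]
    have hμpos : (0:ℝ) < t ^ μ := Real.rpow_pos_of_pos ht μ
    field_simp
    ring
  have h4 : Tendsto (fun t => Real.log (1 + t / t ^ μ) / Real.log t)
      atTop (nhds (1 - μ)) := by
    refine log_asymp (L := 1) one_pos ?_
    have base : Tendsto (fun t : ℝ => t ^ (-(1 - μ)) + 1) atTop (nhds 1) := by
      simpa using (tendsto_rpow_neg_atTop h1μ).add (tendsto_const_nhds (x := (1:ℝ)))
    refine base.congr' ?_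
    filter_upwards [eventually_gt_atTop 0] with t ht
    have hT : t / t ^ μ = t ^ (1 - μ) := by
      rw [Real.rpow_sub ht, Real.rpow_one]
    have hpos : (0:ℝ) < t ^ (1 - μ) := Real.rpow_pos_of_pos ht _
    rw [hT, Real.rpow_neg ht.le]
    field_simp
  have h5 : Tendsto (fun t => Real.log (1 + lam * t ^ ν / W) / Real.log t)
      atTop (nhds ν) := by
    rcases eq_or_lt_of_le hν with hν0 | hνpos
    · refine log_asymp (L := 1 + lam / W) (by positivity) ?_
      subst hν0
      simpa [Real.rpow_zero] using tendsto_const_nhds (x := 1 + lam / W)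
    · refine log_asymp (L := lam / W) (by positivity) ?_
      have base : Tendsto (fun t : ℝ => t ^ (-ν) + lam / W) atTop (nhds (lam / W)) := by
        simpa using (tendsto_rpow_neg_atTop hνpos).add (tendsto_const_nhds (x := lam / W))
      refine base.congr' ?_
      filter_upwards [eventually_gt_atTop 0] with t ht
      have hpos : (0:ℝ) < t ^ ν := Real.rpow_pos_of_pos ht _
      rw [Real.rpow_neg ht.le]
      field_simp
  have hD : Tendsto (fun t => Real.log (1 + t) / Real.log t) atTop (nhds 1) := by
    refine log_asymp (L := 1) one_pos ?_
    have base : Tendsto (fun t : ℝ => t⁻¹ + 1) atTop (nhds 1) := by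
      simpa using tendsto_inv_atTop_zero.add (tendsto_const_nhds (x := (1:ℝ)))
    refine base.congr' ?_
    filter_upwards [eventually_gt_atTop 0] with t ht
    rw [Real.rpow_one]
    field_simp
  -- combined numerators
  have hA : Tendsto (fun t => (Real.log (1 + t / 2) + Real.log (1 + c * t)) / Real.log t)
      atTop (nhds 2) := by
    have h := (h1.add h2).congr (fun t => (add_div _ _ _).symm)
    norm_num at h
    exact h
  have hB : Tendsto (fun t =>
      (Real.log (1 + (t + c * t ^ μ - 1) / 2) + Real.log (1 + t / t ^ μ) +
        W * Real.log (1 + lam * t ^ ν / W)) / Real.log t)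
      atTop (nhds (2 + W * ν - μ)) := by
    have h := (h3.add h4).add (h5.const_mul W)
    rw [show (1:ℝ) + (1 - μ) + W * ν = 2 + W * ν - μ by ring] at h
    refine h.congr fun t => ?_
    ring
  have hG := (hA.min hB).div hD one_ne_zero
  rw [div_one] at hG
  refine hG.congr' ?_
  filter_upwards [eventually_gt_atTop 1] with t ht
  have ht0 : (0:ℝ) < t := lt_trans one_pos ht
  have hlt : 0 < Real.log t := Real.log_pos ht
  have hl1t : 0 < Real.log (1 + t) := Real.log_pos (by linarith)
  have hl2 : 0 < Real.log 2 := Real.log_pos one_lt_two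
  simp only [Pi.div_apply, Real.logb]
  rw [min_div_div_right hlt.le, div_div_cancel'' hlt.ne',
    show Real.log (1 + t / 2) / Real.log 2 + Real.log (1 + (1 - lam) * t) / Real.log 2
      = (Real.log (1 + t / 2) + Real.log (1 + (1 - lam) * t)) / Real.log 2 from by ring,
    show Real.log (1 + (t + (1 - lam) * t ^ μ - 1) / 2) / Real.log 2 +
        Real.log (1 + t / t ^ μ) / Real.log 2 +
        W * (Real.log (1 + lam * t ^ ν / W) / Real.log 2)
      = (Real.log (1 + (t + (1 - lam) * t ^ μ - 1) / 2) + Real.log (1 + t / t ^ μ) +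
          W * Real.log (1 + lam * t ^ ν / W)) / Real.log 2 from by ring,
    min_div_div_right hl2.le, div_div_cancel'' hl2.ne']
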